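/- The complement of a chordless cycle on k vertices is not 3-colourable for any k ≥ 7. -/

import Mathlib

open SimpleGraph

/-- The cycle graph on `ZMod k`: distinct vertices are adjacent iff consecutive. -/
def cycleGraph' (k : ℕ) : SimpleGraph (ZMod k) where
  Adj i j := i ≠ j ∧ (j = i + 1 ∨ i = j + 1)
  symm := ⟨by rintro i j ⟨hne, h | h⟩ <;> exact ⟨hne.symm, by tauto⟩⟩
  loopless := ⟨by rintro i ⟨hne, _⟩; exact hne rfl⟩

theorem stmt_7 (k : ℕ) (hk : 7 ≤ k) : ¬ (cycleGraph' k)ᶜ.Colorable 3 := by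
  rintro ⟨C⟩
  haveI : NeZero k := ⟨by omega⟩
  have hnat : ∀ n : ℕ, 0 < n → n < k → ((n : ZMod k) ≠ 0) := by
    intro n hn hnk h
    rw [ZMod.natCast_eq_zero_iff] at h
    have := Nat.le_of_dvd hn h
    omega
  have key : ∀ a b : ZMod k, a ≠ b → C a = C b → (cycleGraph' k).Adj a b := by
    intro a b hne hcol
    by_contra h
    exact C.valid ⟨hne, h⟩ hcol
  obtain ⟨y, -, hy⟩ := Finset.exists_lt_card_fiber_of_mul_lt_card_of_maps_to
    (s := (Finset.univ : Finset (ZMod k))) (t := (Finset.univ : Finset (Fin 3)))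
    (f := C) (n := 2) (fun a _ => Finset.mem_univ _)
    (by simp [ZMod.card]; omega)
  rw [Finset.two_lt_card_iff] at hy
  obtain ⟨a, b, c, ha, hb, hc, hne1, hne2, hne3⟩ := hy
  simp only [Finset.mem_filter, Finset.mem_univ, true_and] at ha hb hc
  obtain ⟨-, e1 | e1⟩ := key a b hne1 (ha.trans hb.symm) <;>
    obtain ⟨-, e2 | e2⟩ := key a c hne2 (ha.trans hc.symm) <;>
      obtain ⟨-, e3 | e3⟩ := key b c hne3 (hb.trans hc.symm) <;>
  first
  | exact hne1 (by linear_combination e2 - e3)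
  | exact hnat 1 (by norm_num) (by omega) (by
      push_cast
      first
      | linear_combination -e3 - e1 + e2
      | linear_combination -e3 + e1 - e2
      | linear_combination e3 - e1 - e2
      | linear_combination e1 - e2 - e3
      | linear_combination e2 - e1 - e3)
  | exact hnat 3 (by norm_num) (by omega) (by push_cast; linear_combination -e1 - e2 - e3)
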